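/- Let A be a commutative ring and let P₁, Q₁, P₂, Q₂ ∈ A[T] be polynomials such that Q₁ and Q₂ are monic, deg P₁ ≤ deg Q₁, deg P₂ ≤ deg Q₂, and P₁·Q₂ = P₂·Q₁. Then the coefficient of T^{deg Q₁} in P₁ equals the coefficient of T^{deg Q₂} in P₂. -/

import Mathlib

/-- well-definedness of the limit `T → ∞`: if `P₁/Q₁ = P₂/Q₂` with `Qᵢ`
monic and `deg Pᵢ ≤ deg Qᵢ`, then the coefficient of `T^{deg Q₁}` in `P₁` equals the
coefficient of `T^{deg Q₂}` in `P₂`. -/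
theorem stmt5 {A : Type*} [CommRing A] (P₁ Q₁ P₂ Q₂ : Polynomial A)
    (hQ₁ : Q₁.Monic) (hQ₂ : Q₂.Monic)
    (h₁ : P₁.degree ≤ Q₁.degree) (h₂ : P₂.degree ≤ Q₂.degree)
    (h : P₁ * Q₂ = P₂ * Q₁) :
    P₁.coeff Q₁.natDegree = P₂.coeff Q₂.natDegree := by
  have hn₁ : P₁.natDegree ≤ Q₁.natDegree := Polynomial.natDegree_le_natDegree h₁
  have hn₂ : P₂.natDegree ≤ Q₂.natDegree := Polynomial.natDegree_le_natDegree h₂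
  have := congrArg (fun p => Polynomial.coeff p (Q₁.natDegree + Q₂.natDegree)) h
  try simp only at this
  rw [Polynomial.coeff_mul_add_eq_of_natDegree_le hn₁ le_rfl,
    Nat.add_comm, Polynomial.coeff_mul_add_eq_of_natDegree_le hn₂ le_rfl] at this
  rw [hQ₂.coeff_natDegree, hQ₁.coeff_natDegree, mul_one, mul_one] at this
  exact this
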